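/- Let W(A_n) be the Coxeter group of type A_n with generators σ_1,…,σ_n. Every fully commutative element u of W(A_n) has a unique reduced expression of the form u = (σ_{i_1}σ_{i_1−1}⋯σ_{j_1})(σ_{i_2}σ_{i_2−1}⋯σ_{j_2})⋯(σ_{i_p}σ_{i_p−1}⋯σ_{j_p}) with 1 ≤ i_1 < i_2 < ⋯ < i_p ≤ n, 1 ≤ j_1 < j_2 < ⋯ < j_p ≤ n, and j_k ≤ i_k for all 1 ≤ k ≤ p. -/

import Mathlib

open CoxeterSystem
open Fin.NatCast

def CommMove {B : Type*} (M : CoxeterMatrix B) (ω₁ ω₂ : List B) : Prop :=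
  ∃ (l r : List B) (s t : B), M s t = 2 ∧ ω₁ = l ++ s :: t :: r ∧ ω₂ = l ++ t :: s :: r

def CommEquiv {B : Type*} (M : CoxeterMatrix B) : List B → List B → Prop :=
  Relation.ReflTransGen (CommMove M)

def IsRedexOf {B W : Type*} [Group W] {M : CoxeterMatrix B} (cs : CoxeterSystem M W)
    (ω : List B) (w : W) : Prop :=
  cs.wordProd ω = w ∧ cs.IsReduced ω

def IsFC {B W : Type*} [Group W] {M : CoxeterMatrix B} (cs : CoxeterSystem M W) (w : W) : Prop :=
  ∀ ω₁ ω₂, IsRedexOf cs ω₁ w → IsRedexOf cs ω₂ w → CommEquiv M ω₁ ω₂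

/-- The decreasing word `[i, i-1, ..., j]` of (1-based) generator subscripts. -/
def decW (i j : ℕ) : List ℕ := (List.range' j (i + 1 - j)).reverse

set_option linter.unusedSectionVars false

open CoxeterSystem List


section Generic
variable {B : Type*} {M : CoxeterMatrix B}

theorem commMove_symm {w₁ w₂ : List B} (h : CommMove M w₁ w₂) : CommMove M w₂ w₁ := by
  obtain ⟨l, r, s, t, hst, h1, h2⟩ := h
  exact ⟨l, r, t, s, by rwa [M.symmetric], h2, h1⟩

theorem commEquiv_symm {w₁ w₂ : List B} (h : CommEquiv M w₁ w₂) : CommEquiv M w₂ w₁ := by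
  induction h with
  | refl => exact Relation.ReflTransGen.refl
  | tail _ h ih => exact Relation.ReflTransGen.head (commMove_symm h) ih

theorem commMove_filter {w₁ w₂ : List B} (h : CommMove M w₁ w₂) (p : B → Bool)
    (hp : ∀ s t, M s t = 2 → p s → p t → False) : w₁.filter p = w₂.filter p := by
  obtain ⟨l, r, s, t, hst, rfl, rfl⟩ := h
  simp only [List.filter_append, List.filter_cons]
  rcases hps : p s with _ | _ <;> rcases hpt : p t with _ | _ <;> simp
  exact absurd (hp s t hst hps hpt) not_false

theorem commEquiv_filter {w₁ w₂ : List B} (h : CommEquiv M w₁ w₂) (p : B → Bool)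
    (hp : ∀ s t, M s t = 2 → p s → p t → False) : w₁.filter p = w₂.filter p := by
  induction h with
  | refl => rfl
  | tail _ h ih => exact ih.trans (commMove_filter h p hp)

theorem commEquiv_middle (pre mid post : List B) (s : B) (h : ∀ x ∈ mid, M s x = 2) :
    CommEquiv M (pre ++ s :: (mid ++ post)) (pre ++ (mid ++ s :: post)) := by
  induction mid generalizing pre with
  | nil => exact Relation.ReflTransGen.refl
  | cons x mid ih =>
    have step : CommMove M (pre ++ s :: x :: (mid ++ post)) (pre ++ x :: s :: (mid ++ post)) :=
      ⟨pre, mid ++ post, s, x, h x (by simp), rfl, rfl⟩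
    have := ih (pre ++ [x]) (fun y hy => h y (by simp [hy]))
    refine Relation.ReflTransGen.head step ?_
    simpa [CommEquiv] using this
end Generic


theorem mem_decW {x i j : ℕ} : x ∈ decW i j ↔ j ≤ x ∧ x ≤ i := by
  simp only [decW, List.mem_reverse, List.mem_range'_1]
  omega

theorem decW_nil {i j : ℕ} (h : i < j) : decW i j = [] := by
  simp [decW, Nat.sub_eq_zero_of_le h]

theorem decW_self (i : ℕ) : decW i i = [i] := by
  simp [decW, Nat.succ_sub (le_refl i)]

theorem decW_split {i j m : ℕ} (h1 : j ≤ m + 1) (h2 : m ≤ i) :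
    decW i j = decW i (m + 1) ++ decW m j := by
  simp only [decW, ← List.reverse_append]
  congr 1
  rw [show i + 1 - j = (m + 1 - j) + (i + 1 - (m + 1)) by omega, ← List.range'_append_1,
    show j + (m + 1 - j) = m + 1 by omega]

theorem decW_cons {i j : ℕ} (h0 : 1 ≤ j) (h : j ≤ i) : decW i j = i :: decW (i - 1) j := by
  have : i + 1 - j = (i - j) + 1 := by omega
  rw [decW, this, List.range'_1_concat, List.reverse_append,
    show j + (i - j) = i by omega, decW, show i - 1 + 1 - j = i - j by omega]
  rfl

theorem decW_length (i j : ℕ) : (decW i j).length = i + 1 - j := by simp [decW]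

namespace AnNF
variable {n : ℕ} [NeZero n] {W : Type*} [Group W] (cs : CoxeterSystem (CoxeterMatrix.Aₙ n) W)

/-- letter `k` (1-based) as an index in `Fin n`. -/
def phi (n : ℕ) [NeZero n] (k : ℕ) : Fin n := ((k - 1 : ℕ) : Fin n)

theorem phi_val {k : ℕ} (h1 : 1 ≤ k) (h2 : k ≤ n) : (phi n k : ℕ) = k - 1 :=
  Fin.val_cast_of_lt (by omega)

theorem phi_inj {k l : ℕ} (hk1 : 1 ≤ k) (hk2 : k ≤ n) (hl1 : 1 ≤ l) (hl2 : l ≤ n)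
    (h : phi n k = phi n l) : k = l := by
  have := congrArg Fin.val h
  rw [phi_val hk1 hk2, phi_val hl1 hl2] at this
  omega

theorem An_two {a b : Fin n} (h : (a : ℕ) + 2 ≤ b ∨ (b : ℕ) + 2 ≤ a) :
    CoxeterMatrix.Aₙ n a b = 2 := by
  have hab : a ≠ b := by
    intro hh; rw [hh] at h; omega
  show (Matrix.of fun i j : Fin n ↦
    if i = j then 1 else (if (j : ℕ) + 1 = i ∨ (i : ℕ) + 1 = j then 3 else 2)) a b = 2
  simp only [Matrix.of_apply, if_neg hab, ite_eq_right_iff]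
  omega

theorem An_three {a b : Fin n} (h : (a : ℕ) + 1 = b) : CoxeterMatrix.Aₙ n a b = 3 := by
  have hab : a ≠ b := by
    intro hh; rw [hh] at h; omega
  show (Matrix.of fun i j : Fin n ↦
    if i = j then 1 else (if (j : ℕ) + 1 = i ∨ (i : ℕ) + 1 = j then 3 else 2)) a b = 3
  simp only [Matrix.of_apply, if_neg hab, if_pos (Or.inr h)]

theorem simple_comm {B : Type*} {M : CoxeterMatrix B} {W : Type*} [Group W]
    (cs' : CoxeterSystem M W) {a b : B} (h : M a b = 2) :
    cs'.simple a * cs'.simple b = cs'.simple b * cs'.simple a := by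
  have hp := cs'.simple_mul_simple_pow a b
  rw [h, pow_two] at hp
  have : cs'.simple a * cs'.simple b = (cs'.simple a * cs'.simple b)⁻¹ :=
    (eq_inv_of_mul_eq_one_right hp)
  rw [this, mul_inv_rev, cs'.inv_simple, cs'.inv_simple]

theorem simple_braid {B : Type*} {M : CoxeterMatrix B} {W : Type*} [Group W]
    (cs' : CoxeterSystem M W) {a b : B} (h : M a b = 3) :
    cs'.simple a * cs'.simple b * cs'.simple a
      = cs'.simple b * cs'.simple a * cs'.simple b := by
  have hp := cs'.simple_mul_simple_pow a b
  rw [h, pow_succ, pow_two] at hp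
  have h2 : (cs'.simple a * cs'.simple b * cs'.simple a) * (cs'.simple b * cs'.simple a * cs'.simple b) = 1 := by
    rw [← hp]; group
  have h3 := eq_inv_of_mul_eq_one_left h2
  rw [h3]; simp [mul_inv_rev, mul_assoc]

/-- product of the word given by a list of 1-based subscripts. -/
def pr (ω : List ℕ) : W := cs.wordProd (ω.map (phi n))

theorem pr_nil : pr cs [] = 1 := by simp [pr]

theorem pr_append (a b : List ℕ) : pr cs (a ++ b) = pr cs a * pr cs b := by
  simp [pr, cs.wordProd_append]

theorem pr_cons (m : ℕ) (a : List ℕ) : pr cs (m :: a) = cs.simple (phi n m) * pr cs a := by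
  simp [pr, cs.wordProd_cons]

theorem pr_singleton (m : ℕ) : pr cs [m] = cs.simple (phi n m) := by
  simp [pr, wordProd]

def Sep (m x : ℕ) : Prop := m + 2 ≤ x ∨ x + 2 ≤ m

theorem sigma_comm {m x : ℕ} (hm1 : 1 ≤ m) (hmn : m ≤ n) (hx1 : 1 ≤ x) (hxn : x ≤ n)
    (h : Sep m x) : cs.simple (phi n m) * cs.simple (phi n x)
      = cs.simple (phi n x) * cs.simple (phi n m) := by
  refine simple_comm cs (An_two ?_)
  rw [phi_val hm1 hmn, phi_val hx1 hxn]
  rcases h with h | h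
  · left; omega
  · right; omega

theorem sigma_comm_word {m : ℕ} {l : List ℕ} (hm1 : 1 ≤ m) (hmn : m ≤ n)
    (h : ∀ x ∈ l, 1 ≤ x ∧ x ≤ n ∧ Sep m x) :
    cs.simple (phi n m) * pr cs l = pr cs l * cs.simple (phi n m) := by
  induction l with
  | nil => simp [pr_nil]
  | cons x l ih =>
    obtain ⟨hx1, hxn, hsep⟩ := h x (by simp)
    rw [pr_cons, ← mul_assoc, sigma_comm cs hm1 hmn hx1 hxn hsep, mul_assoc,
      ih (fun y hy => h y (by simp [hy])), ← mul_assoc]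

theorem sigma_braid {a : ℕ} (h1 : 1 ≤ a) (h2 : a + 1 ≤ n) :
    cs.simple (phi n a) * cs.simple (phi n (a + 1)) * cs.simple (phi n a)
      = cs.simple (phi n (a + 1)) * cs.simple (phi n a) * cs.simple (phi n (a + 1)) := by
  refine simple_braid cs (An_three ?_)
  rw [phi_val h1 (by omega), phi_val (by omega) h2]
  omega




/-! ### decW product lemmas -/

theorem pr_decW_sep {m i j : ℕ} (hm1 : 1 ≤ m) (hmn : m ≤ n) (hj : 1 ≤ j) (hin : i ≤ n)
    (hsep : ∀ x, j ≤ x → x ≤ i → Sep m x) :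
    cs.simple (phi n m) * pr cs (decW i j) = pr cs (decW i j) * cs.simple (phi n m) := by
  refine sigma_comm_word cs hm1 hmn (fun x hx => ?_)
  rw [mem_decW] at hx
  exact ⟨by omega, by omega, hsep x hx.1 hx.2⟩

theorem pr_decW_braid {i j m : ℕ} (hj : 1 ≤ j) (hji : j ≤ i) (hin : i ≤ n)
    (hjm : j < m) (hmi : m ≤ i) :
    pr cs (decW i j) * cs.simple (phi n m) = cs.simple (phi n (m - 1)) * pr cs (decW i j) := by
  have hm1 : 1 ≤ m := by omega
  have hmn : m ≤ n := by omega
  have hsplit : decW i j = decW i (m + 1) ++ (m :: ((m - 1) :: decW (m - 1 - 1) j)) := by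
    rw [decW_split (m := m) (by omega) hmi, decW_cons hj (by omega),
      decW_cons hj (by omega)]
  set A := decW i (m + 1) with hA
  set C := decW (m - 1 - 1) j with hC
  have hCm : cs.simple (phi n m) * pr cs C = pr cs C * cs.simple (phi n m) :=
    pr_decW_sep cs hm1 hmn hj (by omega) (fun x h1 h2 => Or.inr (by omega))
  have hAm : cs.simple (phi n (m - 1)) * pr cs A = pr cs A * cs.simple (phi n (m - 1)) :=
    pr_decW_sep cs (by omega) (by omega) (by omega) hin (fun x h1 h2 => Or.inl (by omega))
  have hbr := sigma_braid cs (a := m - 1) (by omega) (by omega)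
  rw [show m - 1 + 1 = m by omega] at hbr
  rw [hsplit, pr_append, pr_cons, pr_cons]
  calc pr cs A * (cs.simple (phi n m) * (cs.simple (phi n (m-1)) * pr cs C)) * cs.simple (phi n m)
      = pr cs A * (cs.simple (phi n m) * cs.simple (phi n (m-1))) * (pr cs C * cs.simple (phi n m)) := by
        group
    _ = pr cs A * (cs.simple (phi n m) * cs.simple (phi n (m-1))) * (cs.simple (phi n m) * pr cs C) := by
        rw [← hCm]
    _ = pr cs A * (cs.simple (phi n m) * cs.simple (phi n (m-1)) * cs.simple (phi n m)) * pr cs C := by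
        group
    _ = pr cs A * (cs.simple (phi n (m-1)) * cs.simple (phi n m) * cs.simple (phi n (m-1))) * pr cs C := by
        rw [hbr]
    _ = pr cs A * cs.simple (phi n (m-1)) * (cs.simple (phi n m) * (cs.simple (phi n (m-1)) * pr cs C)) := by
        group
    _ = cs.simple (phi n (m-1)) * pr cs A * (cs.simple (phi n m) * (cs.simple (phi n (m-1)) * pr cs C)) := by
        rw [← hAm]
    _ = cs.simple (phi n (m-1)) * (pr cs A * (cs.simple (phi n m) * (cs.simple (phi n (m-1)) * pr cs C))) := by
        group

/-! ### blocks in reverse order, insertion -/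

def RWd : List (ℕ × ℕ) → List ℕ
  | [] => []
  | (i, j) :: r => RWd r ++ decW i j

theorem RWd_cons (i j : ℕ) (r : List (ℕ × ℕ)) : RWd ((i, j) :: r) = RWd r ++ decW i j := rfl

def RValid (n : ℕ) : ℕ → List (ℕ × ℕ) → Prop
  | _, [] => True
  | c, (i, j) :: r => 1 ≤ j ∧ j ≤ i ∧ i ≤ n ∧ i < c ∧ RValid n i r

theorem RValid_mono {c c' : ℕ} {L : List (ℕ × ℕ)} (h : c ≤ c') (hL : RValid n c L) :
    RValid n c' L := by
  cases L with
  | nil => trivial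
  | cons b r =>
    obtain ⟨bi, bj⟩ := b
    obtain ⟨h1, h2, h3, h4, h5⟩ := hL
    exact ⟨h1, h2, h3, by omega, h5⟩

def insb : List (ℕ × ℕ) → ℕ → List (ℕ × ℕ) × Bool
  | [], m => ([(m, m)], true)
  | (i, j) :: r, m =>
    if i < m then ((m, m) :: (i, j) :: r, true)
    else if m + 2 ≤ j then ((i, j) :: (insb r m).1, (insb r m).2)
    else if m + 1 = j then ((i, m) :: r, true)
    else if m = j then (if j = i then r else (i, j + 1) :: r, false)
    else ((i, j) :: (insb r (m - 1)).1, (insb r (m - 1)).2)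

theorem insb_sound {m : ℕ} {L : List (ℕ × ℕ)} :
    ∀ {c : ℕ}, RValid n c L → 1 ≤ m → m ≤ n → m < c →
    RValid n c (insb L m).1 ∧
    pr cs (RWd (insb L m).1) = pr cs (RWd L) * cs.simple (phi n m) ∧
    (((insb L m).2 = true ∧ (RWd (insb L m).1).length = (RWd L).length + 1) ∨
     ((insb L m).2 = false ∧ (RWd (insb L m).1).length + 1 = (RWd L).length)) := by
  induction L generalizing m with
  | nil =>
    intro c _ hm1 hmn hmc
    refine ⟨⟨hm1, le_refl m, hmn, hmc, trivial⟩, ?_, Or.inl ⟨rfl, ?_⟩⟩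
    · simp [insb, RWd, decW_self, pr_singleton, pr_nil]
    · simp [insb, RWd, decW_self]
  | cons b r ih =>
    obtain ⟨i, j⟩ := b
    intro c hL hm1 hmn hmc
    obtain ⟨h1, h2, h3, h4, h5⟩ := hL
    simp only [insb]
    split_ifs with c1 c2 c3 c4 c5
    · -- i < m : new singleton block on top
      refine ⟨⟨hm1, le_refl m, hmn, hmc, h1, h2, h3, c1, h5⟩, ?_, Or.inl ⟨rfl, ?_⟩⟩
      · simp only [RWd_cons, decW_self, pr_append, pr_singleton]
      · simp [RWd_cons, decW_self]; omega
    · -- m + 2 ≤ j : commutes past the top block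
      obtain ⟨ih1, ih2, ih3⟩ := ih (c := i) h5 hm1 hmn (by omega)
      have hsep : cs.simple (phi n m) * pr cs (decW i j)
          = pr cs (decW i j) * cs.simple (phi n m) :=
        pr_decW_sep cs hm1 hmn h1 h3 (fun x hx1 hx2 => Or.inl (by omega))
      refine ⟨⟨h1, h2, h3, h4, ih1⟩, ?_, ?_⟩
      · simp only [RWd_cons, pr_append]
        rw [ih2, mul_assoc, hsep, ← mul_assoc]
      · simp only [RWd_cons, List.length_append]
        rcases ih3 with ⟨hb, hl⟩ | ⟨hb, hl⟩
        · exact Or.inl ⟨hb, by omega⟩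
        · exact Or.inr ⟨hb, by omega⟩
    · -- m + 1 = j : extend the top block
      have hsplit : decW i m = decW i j ++ [m] := by
        rw [← decW_self m, ← c3, decW_split (m := m) (by omega) (by omega)]
      refine ⟨⟨hm1, by omega, h3, h4, h5⟩, ?_, Or.inl ⟨rfl, ?_⟩⟩
      · simp only [RWd_cons]
        rw [hsplit, pr_append, pr_append, pr_append, pr_singleton, mul_assoc]
      · simp only [RWd_cons, List.length_append, decW_length]
        omega
    · -- m = j, j = i : cancellation removing the top block
      subst c4
      subst c5
      refine ⟨RValid_mono (by omega) h5, ?_, Or.inr ⟨rfl, ?_⟩⟩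
      · simp only [RWd_cons, decW_self, pr_append, pr_singleton,
          cs.simple_mul_simple_cancel_right]
      · simp [RWd_cons, decW_self]
    · -- m = j < i : cancellation shrinking the top block
      subst c4
      have hsplit : decW i m = decW i (m + 1) ++ [m] := by
        rw [← decW_self m, decW_split (m := m) (by omega) (by omega)]
      refine ⟨⟨by omega, by omega, h3, h4, h5⟩, ?_, Or.inr ⟨rfl, ?_⟩⟩
      · simp only [RWd_cons]
        rw [hsplit, ← List.append_assoc, pr_append cs (RWd r ++ decW i (m+1)) [m], pr_singleton,
          cs.simple_mul_simple_cancel_right]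
      · simp only [RWd_cons, List.length_append, decW_length]
        omega
    · -- j < m ≤ i : braid, pass σ_{m-1} to the rest
      have hjm : j < m := by omega
      have hmi : m ≤ i := by omega
      obtain ⟨ih1, ih2, ih3⟩ := ih (m := m - 1) (c := i) h5 (by omega) (by omega) (by omega)
      have hbraid := pr_decW_braid cs h1 h2 h3 hjm hmi
      refine ⟨⟨h1, h2, h3, h4, ih1⟩, ?_, ?_⟩
      · simp only [RWd_cons, pr_append]
        rw [ih2, mul_assoc, ← hbraid, ← mul_assoc]
      · simp only [RWd_cons, List.length_append]
        rcases ih3 with ⟨hb, hl⟩ | ⟨hb, hl⟩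
        · exact Or.inl ⟨hb, by omega⟩
        · exact Or.inr ⟨hb, by omega⟩

theorem build_staircase {ω₀ : List ℕ} (hω : ∀ x ∈ ω₀, 1 ≤ x ∧ x ≤ n)
    (hred : cs.IsReduced (ω₀.map (phi n))) :
    ∃ L, RValid n (n + 1) L ∧ pr cs (RWd L) = pr cs ω₀ ∧ (RWd L).length = ω₀.length := by
  induction ω₀ using List.reverseRecOn with
  | nil => exact ⟨[], trivial, rfl, rfl⟩
  | append_singleton ν m ihn =>
    have hν : ∀ x ∈ ν, 1 ≤ x ∧ x ≤ n := fun x hx => hω x (by simp [hx])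
    have hm : 1 ≤ m ∧ m ≤ n := hω m (by simp)
    have hredν : cs.IsReduced (ν.map (phi n)) := by
      have := hred.take ν.length
      rwa [List.map_append, List.take_left' (by simp)] at this
    obtain ⟨L, hL, hLpr, hLlen⟩ := ihn hν hredν
    obtain ⟨h1, h2, h3⟩ := insb_sound cs (m := m) hL hm.1 hm.2 (by omega)
    refine ⟨(insb L m).1, h1, ?_, ?_⟩
    · rw [h2, hLpr, pr_append, pr_singleton]
    · rcases h3 with ⟨_, hl⟩ | ⟨_, hl⟩
      · simp [hl, hLlen]
      · -- impossible: the word got shorter although ν ++ [m] is reduced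
        exfalso
        have hlen : cs.length (pr cs (ν ++ [m])) = ν.length + 1 := by
          have := hred
          unfold CoxeterSystem.IsReduced at this
          simpa [pr] using this
        have hle : cs.length (pr cs (RWd (insb L m).1)) ≤ (RWd (insb L m).1).length := by
          simpa [pr] using cs.length_wordProd_le ((RWd (insb L m).1).map (phi n))
        rw [h2, hLpr, ← pr_singleton cs m, ← pr_append] at hle
        omega

theorem commMove_wordProd {B : Type*} {M : CoxeterMatrix B} {W' : Type*} [Group W']
    (cs' : CoxeterSystem M W') {w₁ w₂ : List B} (h : CommMove M w₁ w₂) :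
    cs'.wordProd w₁ = cs'.wordProd w₂ := by
  obtain ⟨l, r, s, t, hst, rfl, rfl⟩ := h
  rw [cs'.wordProd_append, cs'.wordProd_append, cs'.wordProd_cons, cs'.wordProd_cons,
    cs'.wordProd_cons, cs'.wordProd_cons]
  rw [show cs'.simple t * (cs'.simple s * cs'.wordProd r)
      = cs'.simple t * cs'.simple s * cs'.wordProd r from by group,
    ← simple_comm cs' hst]
  group

theorem commEquiv_wordProd {B : Type*} {M : CoxeterMatrix B} {W' : Type*} [Group W']
    (cs' : CoxeterSystem M W') {w₁ w₂ : List B} (h : CommEquiv M w₁ w₂) :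
    cs'.wordProd w₁ = cs'.wordProd w₂ := by
  induction h with
  | refl => rfl
  | tail _ h ih => exact ih.trans (commMove_wordProd cs' h)

theorem fc_step {u : W} (hu : ∀ ω₁ ω₂, (cs.wordProd ω₁ = u ∧ cs.IsReduced ω₁) →
      (cs.wordProd ω₂ = u ∧ cs.IsReduced ω₂) → CommEquiv (CoxeterMatrix.Aₙ n) ω₁ ω₂)
    {X Y : List ℕ} {i j i' j' : ℕ}
    (hj : 1 ≤ j) (hji : j ≤ i) (hj' : 1 ≤ j') (hji' : j' ≤ i') (hin' : i' ≤ n)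
    (hii : i < i') (hjj : j' ≤ j)
    (hred : cs.IsReduced ((X ++ decW i j ++ (decW i' j' ++ Y)).map (phi n)))
    (hprod : pr cs (X ++ decW i j ++ (decW i' j' ++ Y)) = u) : False := by
  set m := j with hm
  have hm1 : 1 ≤ m := hj
  have hmn : m + 1 ≤ n := by omega
  set A := decW i (m + 1) with hA
  set Bm := decW i' (m + 2) with hB
  set C := decW (m - 1) j' with hC
  set Q := C ++ Y with hQ
  have hsplit1 : decW i j = A ++ [m] := by
    rw [hA, ← decW_self m, ← decW_split (by omega) (by omega)]
  have hsplit2 : decW i' j' = Bm ++ ((m + 1) :: m :: C) := by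
    have e1 : decW i' j' = decW i' (m + 2) ++ decW (m + 1) j' :=
      decW_split (by omega) (by omega)
    have e2 : decW (m + 1) j' = (m + 1) :: decW m j' := by
      simpa using decW_cons hj' (show j' ≤ m + 1 by omega)
    have e3 : decW m j' = m :: decW (m - 1) j' := decW_cons hj' (by omega)
    rw [e1, e2, e3]
  set ω := X ++ decW i j ++ (decW i' j' ++ Y) with hω
  set ω₂ := (X ++ A ++ Bm) ++ ([m, m + 1, m] ++ Q) with hω₂
  set ω₃ := (X ++ A ++ Bm) ++ ([m + 1, m, m + 1] ++ Q) with hω₃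
  have hωeq : ω = (X ++ A) ++ ([m] ++ (Bm ++ ((m + 1) :: m :: Q))) := by
    rw [hω, hsplit1, hsplit2, hQ]; simp [List.append_assoc]
  -- the commutation moves
  have hmid : ∀ x ∈ Bm.map (phi n), (CoxeterMatrix.Aₙ n) (phi n m) x = 2 := by
    intro x hx
    obtain ⟨t, ht, rfl⟩ := List.mem_map.mp hx
    rw [hB, mem_decW] at ht
    refine An_two ?_
    rw [phi_val hm1 (by omega), phi_val (by omega) (by omega)]
    left; omega
  have hcomm : CommEquiv (CoxeterMatrix.Aₙ n) (ω.map (phi n)) (ω₂.map (phi n)) := by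
    have := commEquiv_middle ((X ++ A).map (phi n)) (Bm.map (phi n))
      (((m + 1) :: m :: Q).map (phi n)) (phi n m) hmid
    rw [hωeq, hω₂]
    simpa [List.map_append, List.append_assoc] using this
  -- products
  have hbr := sigma_braid cs hm1 hmn
  have hseg : pr cs [m, m + 1, m] = pr cs [m + 1, m, m + 1] := by
    simp only [pr_cons, pr_nil, mul_one, ← mul_assoc]
    exact hbr
  have hpr23 : pr cs ω₂ = pr cs ω₃ := by
    rw [hω₂, hω₃]
    simp only [pr_append]
    rw [hseg]
  have hpr12 : pr cs ω = pr cs ω₂ := commEquiv_wordProd cs hcomm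
  -- ω₃ is also a reduced word for u
  have hlen23 : ω₂.length = ω₃.length := by simp [hω₂, hω₃]
  have hlen12 : ω.length = ω₂.length := by
    simp only [hωeq, hω₂, hQ, List.length_append, List.length_cons, List.length_map]
    simp; omega
  have hred3 : cs.IsReduced (ω₃.map (phi n)) := by
    unfold CoxeterSystem.IsReduced at hred ⊢
    have : cs.wordProd (ω₃.map (phi n)) = cs.wordProd (ω.map (phi n)) := by
      show pr cs ω₃ = pr cs ω
      rw [hpr12, hpr23]
    rw [this, hred]
    simp only [List.length_map]
    omega
  have hprod3 : cs.wordProd (ω₃.map (phi n)) = u := by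
    show pr cs ω₃ = u
    rw [← hpr23, ← hpr12, hprod]
  -- FC hypothesis
  have hfc := hu (ω.map (phi n)) (ω₃.map (phi n)) ⟨hprod, hred⟩ ⟨hprod3, hred3⟩
  have hce : CommEquiv (CoxeterMatrix.Aₙ n) (ω₂.map (phi n)) (ω₃.map (phi n)) :=
    Relation.ReflTransGen.trans (commEquiv_symm hcomm) hfc
  -- count invariance gives a contradiction
  have hfil := commEquiv_filter hce (fun x => x == phi n m) ?_
  · have hne : phi n (m + 1) ≠ phi n m := by
      intro hcontra
      have := phi_inj (by omega) hmn hm1 (by omega) hcontra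
      omega
    have := congrArg List.length hfil
    rw [hω₂, hω₃] at this
    simp only [List.map_append, List.filter_append, List.length_append, List.map_cons,
      List.filter_cons] at this
    simp [hne] at this
  · intro s t hst h1 h2
    rw [show s = phi n m from by simpa using h1, show t = phi n m from by simpa using h2] at hst
    simp at hst

/-! ### word-order blocks, filters, and the determination lemma -/

def Wd (Bs : List (ℕ × ℕ)) : List ℕ := Bs.flatMap fun b => decW b.1 b.2

theorem Wd_nil : Wd [] = [] := rfl

theorem Wd_append (a b : List (ℕ × ℕ)) : Wd (a ++ b) = Wd a ++ Wd b := by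
  simp [Wd]

theorem Wd_concat (a : List (ℕ × ℕ)) (i j : ℕ) :
    Wd (a ++ [(i, j)]) = Wd a ++ decW i j := by
  simp [Wd]

theorem RWd_eq_Wd_reverse (L : List (ℕ × ℕ)) : RWd L = Wd L.reverse := by
  induction L with
  | nil => rfl
  | cons b r ih =>
    obtain ⟨bi, bj⟩ := b
    rw [RWd_cons, ih, List.reverse_cons, Wd_concat]

def Ok (n : ℕ) (Bs : List (ℕ × ℕ)) : Prop :=
  (∀ b ∈ Bs, 1 ≤ b.2 ∧ b.2 ≤ b.1 ∧ b.1 ≤ n) ∧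
    Bs.Pairwise fun x y => x.1 < y.1 ∧ x.2 < y.2

theorem Ok_concat {n : ℕ} {l : List (ℕ × ℕ)} {i j : ℕ} (h : Ok n (l ++ [(i, j)])) :
    Ok n l ∧ 1 ≤ j ∧ j ≤ i ∧ i ≤ n ∧ ∀ b ∈ l, b.1 < i ∧ b.2 < j := by
  obtain ⟨hb, hp⟩ := h
  rw [List.pairwise_append] at hp
  obtain ⟨hp1, _, hp3⟩ := hp
  obtain ⟨g1, g2, g3⟩ := hb (i, j) (by simp)
  exact ⟨⟨fun b hbmem => hb b (by simp [hbmem]), hp1⟩, g1, g2, g3,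
    fun b hbmem => hp3 b hbmem (i, j) (by simp)⟩

theorem mem_Wd_le {n : ℕ} {l : List (ℕ × ℕ)} {i j : ℕ} (h : Ok n (l ++ [(i, j)])) :
    ∀ x ∈ Wd (l ++ [(i, j)]), x ≤ i := by
  intro x hx
  obtain ⟨b, hb, hxb⟩ := List.mem_flatMap.mp hx
  rw [mem_decW] at hxb
  rcases List.mem_append.mp hb with hb' | hb'
  · have := (Ok_concat h).2.2.2.2 b hb'
    omega
  · simp at hb'
    subst hb'
    simp at hxb
    omega

theorem top_mem_Wd {l : List (ℕ × ℕ)} {i j : ℕ} (hji : j ≤ i) :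
    i ∈ Wd (l ++ [(i, j)]) :=
  List.mem_flatMap.mpr ⟨(i, j), by simp, mem_decW.mpr ⟨hji, le_refl i⟩⟩

/-- pair filter picking out the letters `t` and `t+1` -/
def pf (t : ℕ) (l : List ℕ) : List ℕ := l.filter fun x => decide (x = t ∨ x = t + 1)

theorem pf_append (t : ℕ) (a b : List ℕ) : pf t (a ++ b) = pf t a ++ pf t b := by
  simp [pf]

theorem pf_decW_high {t i : ℕ} (h : t + 2 ≤ i + 1) : pf t (decW i (t + 2)) = [] := by
  rw [pf, List.filter_eq_nil_iff]
  intro x hx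
  rw [mem_decW] at hx
  simp only [decide_eq_true_eq]
  omega

theorem pf_decW_low {t j i : ℕ} (h : i + 1 ≤ t) : pf t (decW i j) = [] := by
  rw [pf, List.filter_eq_nil_iff]
  intro x hx
  rw [mem_decW] at hx
  simp only [decide_eq_true_eq]
  omega

theorem pf_decW_of_lt {t i j : ℕ} (h0 : 1 ≤ j) (ht : 1 ≤ t) (h1 : j ≤ t) (h2 : t + 1 ≤ i) :
    pf t (decW i j) = [t + 1, t] := by
  have hsplit : decW i j = decW i (t + 2) ++ ((t + 1) :: t :: decW (t - 1) j) := by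
    have e1 : decW i j = decW i (t + 2) ++ decW (t + 1) j := decW_split (by omega) (by omega)
    have e2 : decW (t + 1) j = (t + 1) :: decW t j := by
      simpa using decW_cons h0 (show j ≤ t + 1 by omega)
    have e3 : decW t j = t :: decW (t - 1) j := decW_cons h0 (by omega)
    rw [e1, e2, e3]
  rw [hsplit, pf_append, pf_decW_high (by omega)]
  have hrest : pf t (decW (t - 1) j) = [] := pf_decW_low (by omega)
  simp [pf] at hrest ⊢
  exact hrest

theorem pf_decW_of_eq {t i : ℕ} (h2 : t + 1 ≤ i) : pf t (decW i (t + 1)) = [t + 1] := by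
  have hsplit : decW i (t + 1) = decW i (t + 2) ++ [t + 1] := by
    rw [← decW_self (t + 1), ← decW_split (by omega) (by omega)]
  rw [hsplit, pf_append, pf_decW_high (by omega)]
  simp [pf]

theorem nonnil_of_count {l l' : List ℕ} (h : ∀ t, l.count t = l'.count t) {x : ℕ}
    (hx : x ∈ l) : l' ≠ [] := by
  intro hnil
  subst hnil
  have h1 : 0 < l.count x := List.count_pos_iff.mpr hx
  have h2 := h x
  simp only [List.count_nil] at h2
  omega

theorem det_j_aux {n : ℕ} {l l' : List (ℕ × ℕ)} {i j j' : ℕ}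
    (h : Ok n (l ++ [(i, j)])) (h' : Ok n (l' ++ [(i, j')])) (hjj : j < j')
    (hpf : ∀ t, 1 ≤ t → t + 1 ≤ n →
      pf t (Wd (l ++ [(i, j)])) = pf t (Wd (l' ++ [(i, j')]))) : False := by
  obtain ⟨_, hj1, hji, hin, _⟩ := Ok_concat h
  obtain ⟨_, hj1', hji', hin', _⟩ := Ok_concat h'
  set t := j' - 1 with ht
  have h1 : 1 ≤ t := by omega
  have h2 : t + 1 ≤ n := by omega
  have e1 : pf t (Wd (l ++ [(i, j)])) = (pf t (Wd l) ++ [t + 1]) ++ [t] := by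
    rw [Wd_concat, pf_append, pf_decW_of_lt hj1 h1 (by omega) (by omega)]
    simp
  have e2 : pf t (Wd (l' ++ [(i, j')])) = pf t (Wd l') ++ [t + 1] := by
    rw [Wd_concat, pf_append, show j' = t + 1 by omega, pf_decW_of_eq (by omega)]
  have := hpf t h1 h2
  rw [e1, e2] at this
  have g1 := List.getLast?_concat (a := t) (l := pf t (Wd l) ++ [t + 1])
  have g2 := List.getLast?_concat (a := t + 1) (l := pf t (Wd l'))
  rw [this, g2] at g1
  simp at g1

theorem det {n : ℕ} : ∀ (Bs Bs' : List (ℕ × ℕ)), Ok n Bs → Ok n Bs' →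
    (∀ t : ℕ, (Wd Bs).count t = (Wd Bs').count t) →
    (∀ t : ℕ, 1 ≤ t → t + 1 ≤ n → pf t (Wd Bs) = pf t (Wd Bs')) →
    Wd Bs = Wd Bs' := by
  intro Bs
  induction Bs using List.reverseRecOn with
  | nil =>
    intro Bs' _ hOk' hc _
    rcases Bs'.eq_nil_or_concat' with rfl | ⟨l', b', rfl⟩
    · rfl
    · obtain ⟨bi, bj⟩ := b'
      obtain ⟨_, hj1', hji', _, _⟩ := Ok_concat hOk'
      exact absurd rfl (nonnil_of_count (fun t => (hc t).symm) (top_mem_Wd hji'))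
  | append_singleton l b ihl =>
    obtain ⟨i, j⟩ := b
    intro Bs' hOk hOk' hc hpf
    rcases Bs'.eq_nil_or_concat' with rfl | ⟨l', b', rfl⟩
    · obtain ⟨_, hj1, hji, _, _⟩ := Ok_concat hOk
      exact absurd rfl (nonnil_of_count hc (top_mem_Wd hji))
    obtain ⟨i', j'⟩ := b'
    obtain ⟨hOkl, hj1, hji, hin, hlt⟩ := Ok_concat hOk
    obtain ⟨hOkl', hj1', hji', hin', hlt'⟩ := Ok_concat hOk'
    -- the tops agree
    have hii : i = i' := by
      have m1 : i ∈ Wd (l' ++ [(i', j')]) := by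
        rw [← List.count_pos_iff, ← hc i, List.count_pos_iff]
        exact top_mem_Wd hji
      have m2 : i' ∈ Wd (l ++ [(i, j)]) := by
        rw [← List.count_pos_iff, hc i', List.count_pos_iff]
        exact top_mem_Wd hji'
      have := mem_Wd_le hOk' i m1
      have := mem_Wd_le hOk i' m2
      omega
    subst hii
    -- the bottoms agree
    have hjj : j = j' := by
      rcases Nat.lt_trichotomy j j' with hlt1 | heq | hlt2
      · exact absurd (det_j_aux hOk hOk' hlt1 hpf) not_false
      · exact heq
      · exact absurd (det_j_aux hOk' hOk hlt2
          (fun t a b => (hpf t a b).symm)) not_false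
    subst hjj
    -- strip the last block and use the induction hypothesis
    have key : Wd l = Wd l' := by
      refine ihl l' hOkl hOkl' ?_ ?_
      · intro t
        have := hc t
        rw [Wd_concat, Wd_concat, List.count_append, List.count_append] at this
        omega
      · intro t a b
        have := hpf t a b
        rw [Wd_concat, Wd_concat, pf_append, pf_append] at this
        exact List.append_cancel_right this
    rw [Wd_concat, Wd_concat, key]

/-! ### auxiliary list lemmas -/

theorem exists_violation {α : Type*} {R : α → α → Prop} :
    ∀ {l : List α}, ¬ l.Chain' R → ∃ l1 a b l2, l = l1 ++ a :: b :: l2 ∧ ¬ R a b := by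
  intro l
  induction l with
  | nil => intro h; exact absurd List.isChain_nil h
  | cons a t ih =>
    intro h
    cases t with
    | nil => exact absurd (List.isChain_singleton a) h
    | cons b t' =>
      rw [show List.Chain' R (a :: b :: t') ↔ R a b ∧ List.Chain' R (b :: t') from List.isChain_cons_cons] at h
      by_cases hab : R a b
      · have h2 : ¬ (b :: t').Chain' R := fun hc => h ⟨hab, hc⟩
        obtain ⟨l1, x, y, l2, heq, hv⟩ := ih h2
        exact ⟨a :: l1, x, y, l2, by rw [List.cons_append, heq], hv⟩
      · exact ⟨[], a, b, t', rfl, hab⟩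

theorem flatMap_congr {α β : Type*} {l : List α} {f g : α → List β}
    (h : ∀ a ∈ l, f a = g a) : l.flatMap f = l.flatMap g := by
  induction l with
  | nil => rfl
  | cons a t ih =>
    simp only [List.flatMap_cons]
    rw [h a (List.mem_cons_self), ih (fun b hb => h b (List.mem_cons_of_mem _ hb))]

theorem Wd_getD (Bs : List (ℕ × ℕ)) :
    Wd Bs = (List.range Bs.length).flatMap
      (fun k => decW ((Bs.getD k (0, 0)).1) ((Bs.getD k (0, 0)).2)) := by
  induction Bs using List.reverseRecOn with
  | nil => rfl
  | append_singleton l b ih =>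
    obtain ⟨bi, bj⟩ := b
    rw [Wd_concat, List.length_append, List.length_singleton, List.range_succ,
      List.flatMap_append]
    congr 1
    · rw [ih]
      refine flatMap_congr ?_
      intro k hk
      rw [List.mem_range] at hk
      rw [List.getD_append _ _ _ _ hk]
    · simp only [List.flatMap_cons, List.flatMap_nil, List.append_nil]
      rw [List.getD_append_right _ _ _ _ (le_refl _), Nat.sub_self]
      rfl

theorem RValid_all {c : ℕ} {L : List (ℕ × ℕ)} (h : RValid n c L) :
    (∀ b ∈ L, 1 ≤ b.2 ∧ b.2 ≤ b.1 ∧ b.1 ≤ n ∧ b.1 < c) ∧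
      L.Pairwise (fun x y => y.1 < x.1) := by
  induction L generalizing c with
  | nil => exact ⟨by simp, List.Pairwise.nil⟩
  | cons b r ih =>
    obtain ⟨bi, bj⟩ := b
    obtain ⟨h1, h2, h3, h4, h5⟩ := h
    obtain ⟨ihb, ihp⟩ := ih h5
    constructor
    · intro x hx
      rcases List.mem_cons.mp hx with rfl | hx'
      · exact ⟨h1, h2, h3, h4⟩
      · have := ihb x hx'
        exact ⟨this.1, this.2.1, this.2.2.1, by omega⟩
    · exact List.Pairwise.cons (fun x hx => (ihb x hx).2.2.2) ihp

/-! ### transfer of invariants through `phi` -/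

theorem map_phi_injOn : ∀ {l l' : List ℕ}, (∀ x ∈ l, 1 ≤ x ∧ x ≤ n) →
    (∀ x ∈ l', 1 ≤ x ∧ x ≤ n) → l.map (phi n) = l'.map (phi n) → l = l' := by
  intro l
  induction l with
  | nil =>
    intro l' _ _ h
    cases l' with
    | nil => rfl
    | cons b t => simp at h
  | cons a t ih =>
    intro l' hl hl' h
    cases l' with
    | nil => simp at h
    | cons b t' =>
      simp only [List.map_cons, List.cons.injEq] at h
      obtain ⟨ha1, ha2⟩ := hl a (by simp)
      obtain ⟨hb1, hb2⟩ := hl' b (by simp)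
      rw [phi_inj ha1 ha2 hb1 hb2 h.1,
        ih (fun x hx => hl x (by simp [hx])) (fun x hx => hl' x (by simp [hx])) h.2]

theorem transfer_count {ω ω' : List ℕ} (hω : ∀ x ∈ ω, 1 ≤ x ∧ x ≤ n)
    (hω' : ∀ x ∈ ω', 1 ≤ x ∧ x ≤ n)
    (h : CommEquiv (CoxeterMatrix.Aₙ n) (ω.map (phi n)) (ω'.map (phi n))) :
    ∀ t, ω.count t = ω'.count t := by
  intro t
  by_cases hb : 1 ≤ t ∧ t ≤ n
  · have hfil := commEquiv_filter h (fun x => x == phi n t) ?_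
    · rw [List.filter_map, List.filter_map] at hfil
      have congr1 : ∀ {l : List ℕ}, (∀ x ∈ l, 1 ≤ x ∧ x ≤ n) →
          l.filter ((fun x => x == phi n t) ∘ (phi n)) = l.filter (fun x => x == t) := by
        intro l hl
        refine List.filter_congr ?_
        intro x hx
        obtain ⟨hx1, hx2⟩ := hl x hx
        simp only [Function.comp_apply]
        rw [Bool.eq_iff_iff]
        simp only [beq_iff_eq]
        constructor
        · intro hcontra; exact phi_inj hx1 hx2 hb.1 hb.2 hcontra
        · intro hcontra; rw [hcontra]
      rw [congr1 hω, congr1 hω'] at hfil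
      have := congrArg List.length hfil
      simp only [List.length_map] at this
      rw [show ∀ l : List ℕ, l.count t = (l.filter (fun x => x == t)).length from
        fun l => by rw [List.count_eq_countP, List.countP_eq_length_filter],
        show ω'.count t = (ω'.filter (fun x => x == t)).length from
        by rw [List.count_eq_countP, List.countP_eq_length_filter]]
      exact this
    · intro s t' hst hs ht'
      rw [show s = phi n t from by simpa using hs,
        show t' = phi n t from by simpa using ht'] at hst
      simp at hst
  · rw [List.count_eq_zero_of_not_mem, List.count_eq_zero_of_not_mem]
    · intro hmem; exact hb ⟨(hω' t hmem).1, (hω' t hmem).2⟩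
    · intro hmem; exact hb ⟨(hω t hmem).1, (hω t hmem).2⟩

theorem transfer_pf {ω ω' : List ℕ} (hω : ∀ x ∈ ω, 1 ≤ x ∧ x ≤ n)
    (hω' : ∀ x ∈ ω', 1 ≤ x ∧ x ≤ n)
    (h : CommEquiv (CoxeterMatrix.Aₙ n) (ω.map (phi n)) (ω'.map (phi n))) :
    ∀ t, 1 ≤ t → t + 1 ≤ n → pf t ω = pf t ω' := by
  intro t h1 h2
  have hMM : (CoxeterMatrix.Aₙ n) (phi n t) (phi n (t + 1)) = 3 := by
    refine An_three ?_
    rw [phi_val h1 (by omega), phi_val (by omega) h2]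
    omega
  have hne : phi n t ≠ phi n (t + 1) := fun hc => by
    have := phi_inj h1 (by omega) (by omega) h2 hc
    omega
  have hfil := commEquiv_filter h (fun x => x == phi n t || x == phi n (t + 1)) ?_
  · rw [List.filter_map, List.filter_map] at hfil
    have congr1 : ∀ {l : List ℕ}, (∀ x ∈ l, 1 ≤ x ∧ x ≤ n) →
        l.filter ((fun x => x == phi n t || x == phi n (t + 1)) ∘ (phi n))
          = l.filter (fun x => decide (x = t ∨ x = t + 1)) := by
      intro l hl
      refine List.filter_congr ?_
      intro x hx
      obtain ⟨hx1, hx2⟩ := hl x hx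
      simp only [Function.comp_apply, Bool.or_eq_true, beq_iff_eq, decide_eq_true_eq]
      rw [Bool.eq_iff_iff]
      simp only [Bool.or_eq_true, beq_iff_eq, decide_eq_true_eq]
      constructor
      · rintro (hc | hc)
        · exact Or.inl (phi_inj hx1 hx2 h1 (by omega) hc)
        · exact Or.inr (phi_inj hx1 hx2 (by omega) h2 hc)
      · rintro (rfl | rfl)
        · simp
        · simp
    rw [congr1 hω, congr1 hω'] at hfil
    refine map_phi_injOn ?_ ?_ hfil
    · intro x hx; exact hω x (List.mem_of_mem_filter hx)
    · intro x hx; exact hω' x (List.mem_of_mem_filter hx)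
  · intro s t' hst hs ht'
    simp only [Bool.or_eq_true, beq_iff_eq] at hs ht'
    rcases hs with rfl | rfl <;> rcases ht' with h' | h'
    · rw [h'] at hst; simp at hst
    · rw [h', hMM] at hst; omega
    · rw [h', (CoxeterMatrix.Aₙ n).symmetric] at hst
      rw [hMM] at hst; omega
    · rw [h'] at hst; simp at hst

theorem entries_Wd {Bs : List (ℕ × ℕ)} (h : Ok n Bs) :
    ∀ x ∈ Wd Bs, 1 ≤ x ∧ x ≤ n := by
  intro x hx
  obtain ⟨b, hb, hxb⟩ := List.mem_flatMap.mp hx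
  rw [mem_decW] at hxb
  obtain ⟨g1, g2, g3⟩ := h.1 b hb
  omega

theorem staircase_of_fc {u : W}
    (hu : ∀ ω₁ ω₂, (cs.wordProd ω₁ = u ∧ cs.IsReduced ω₁) →
      (cs.wordProd ω₂ = u ∧ cs.IsReduced ω₂) → CommEquiv (CoxeterMatrix.Aₙ n) ω₁ ω₂) :
    ∃ Bs, Ok n Bs ∧ pr cs (Wd Bs) = u ∧ cs.IsReduced ((Wd Bs).map (phi n)) := by
  obtain ⟨ωF, hredF, hprodF⟩ := cs.exists_reduced_word' u
  set ω₀ := List.map (fun f : Fin n => (f : ℕ) + 1) ωF with hω₀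
  have hmapback : ω₀.map (phi n) = ωF := by
    rw [hω₀, List.map_map]
    have hcomp : (phi n) ∘ (fun f : Fin n => (f : ℕ) + 1) = id := by
      funext f
      simp [phi]
    rw [hcomp, List.map_id]
  have hent₀ : ∀ x ∈ ω₀, 1 ≤ x ∧ x ≤ n := by
    intro x hx
    rw [hω₀] at hx
    obtain ⟨f, _, rfl⟩ := List.mem_map.mp hx
    exact ⟨by omega, by have := f.2; omega⟩
  have hred₀ : cs.IsReduced (ω₀.map (phi n)) := by rw [hmapback]; exact hredF
  obtain ⟨L, hLval, hLpr, hLlen⟩ := build_staircase cs hent₀ hred₀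
  set Bs := L.reverse with hBs
  have hWd : Wd Bs = RWd L := (RWd_eq_Wd_reverse L).symm
  have hprodW : pr cs (Wd Bs) = u := by
    rw [hWd, hLpr]
    show pr cs ω₀ = u
    rw [pr, hmapback, ← hprodF]
  have hlenW : (Wd Bs).length = ωF.length := by
    rw [hWd, hLlen, hω₀]; simp
  have hredW : cs.IsReduced ((Wd Bs).map (phi n)) := by
    unfold CoxeterSystem.IsReduced
    rw [show cs.wordProd ((Wd Bs).map (phi n)) = u from hprodW, List.length_map, hlenW, hprodF]
    exact hredF
  obtain ⟨hbounds, hpw_rev⟩ := RValid_all hLval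
  have hb' : ∀ b ∈ Bs, 1 ≤ b.2 ∧ b.2 ≤ b.1 ∧ b.1 ≤ n := by
    intro b hb
    have := hbounds b (by rwa [hBs, List.mem_reverse] at hb)
    tauto
  have hpw_i : Bs.Pairwise (fun x y => x.1 < y.1) := by
    rw [hBs, List.pairwise_reverse]
    exact hpw_rev
  have hch : Bs.Chain' (fun x y => x.2 < y.2) := by
    by_contra hc
    obtain ⟨l1, a, b, l2, heq, hv⟩ := exists_violation hc
    have hab : a.1 < b.1 := by
      have hinf : [a, b] <:+: Bs := ⟨l1, l2, by rw [heq]; simp⟩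
      have := hpw_i.sublist hinf.sublist
      rcases List.pairwise_cons.mp this with ⟨hr, _⟩
      exact hr b (by simp)
    have ha := hb' a (by rw [heq]; simp)
    have hbb := hb' b (by rw [heq]; simp)
    have hshape : Wd Bs = Wd l1 ++ decW a.1 a.2 ++ (decW b.1 b.2 ++ Wd l2) := by
      rw [heq]
      simp [Wd, List.append_assoc]
    exact fc_step cs hu ha.1 ha.2.1 hbb.1 hbb.2.1 hbb.2.2 hab (by omega)
      (by rw [← hshape]; exact hredW) (by rw [← hshape]; exact hprodW)
  refine ⟨Bs, ⟨hb', hpw_i.and ?_⟩, hprodW, hredW⟩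
  have : IsTrans (ℕ × ℕ) (fun x y => x.2 < y.2) := ⟨fun a b c h1 h2 => lt_trans h1 h2⟩
  exact List.isChain_iff_pairwise.mp hch

end AnNF


open AnNF in
/-- Every fully commutative element of the type `Aₙ` Coxeter group has a unique reduced
expression of the form
`(σ_{i₁} ⋯ σ_{j₁})(σ_{i₂} ⋯ σ_{j₂}) ⋯ (σ_{i_p} ⋯ σ_{j_p})`
with `i₁ < ⋯ < i_p`, `j₁ < ⋯ < j_p` and `j_k ≤ i_k`.  Here the (1-based) subscript `k`
corresponds to the generator indexed by `k - 1 : Fin n`. -/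
theorem An_fc_normal_form (n : ℕ) [NeZero n] {W : Type*} [Group W]
    (cs : CoxeterSystem (CoxeterMatrix.Aₙ n) W) (u : W) (hu : IsFC cs u) :
    ∃! ω : List ℕ,
      (∃ (p : ℕ) (i j : ℕ → ℕ),
        (∀ k, k < p → 1 ≤ j k ∧ j k ≤ i k ∧ i k ≤ n) ∧
        (∀ k l, k < l → l < p → i k < i l) ∧
        (∀ k l, k < l → l < p → j k < j l) ∧
        ω = (List.range p).flatMap fun k => decW (i k) (j k)) ∧
      IsRedexOf cs (ω.map fun k => ((k - 1 : ℕ) : Fin n)) u := by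
  have hu' : ∀ ω₁ ω₂, (cs.wordProd ω₁ = u ∧ cs.IsReduced ω₁) →
      (cs.wordProd ω₂ = u ∧ cs.IsReduced ω₂) → CommEquiv (CoxeterMatrix.Aₙ n) ω₁ ω₂ := hu
  obtain ⟨Bs, hOk, hprod, hred⟩ := staircase_of_fc cs hu'
  refine ⟨Wd Bs, ⟨⟨Bs.length, fun k => (Bs.getD k (0, 0)).1, fun k => (Bs.getD k (0, 0)).2,
    ?_, ?_, ?_, Wd_getD Bs⟩, ?_, ?_⟩, ?_⟩
  · -- bounds
    intro k hk
    dsimp only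
    rw [List.getD_eq_getElem _ _ hk]
    exact hOk.1 _ (Bs.getElem_mem hk)
  · -- tops increasing
    intro k l hkl hl
    dsimp only
    rw [List.getD_eq_getElem _ _ (show k < Bs.length by omega), List.getD_eq_getElem _ _ hl]
    exact (List.pairwise_iff_getElem.mp hOk.2 k l (by omega) hl hkl).1
  · -- bottoms increasing
    intro k l hkl hl
    dsimp only
    rw [List.getD_eq_getElem _ _ (show k < Bs.length by omega), List.getD_eq_getElem _ _ hl]
    exact (List.pairwise_iff_getElem.mp hOk.2 k l (by omega) hl hkl).2
  · exact hprod
  · exact hred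
  · -- uniqueness
    rintro y ⟨⟨p, i, j, hb, hi, hj, rfl⟩, hredex⟩
    have hyprod : cs.wordProd (((List.range p).flatMap fun k => decW (i k) (j k)).map (phi n)) = u :=
      hredex.1
    have hyred : cs.IsReduced (((List.range p).flatMap fun k => decW (i k) (j k)).map (phi n)) :=
      hredex.2
    set Bsy := (List.range p).map (fun k => (i k, j k)) with hBsy
    have hWdy : Wd Bsy = (List.range p).flatMap fun k => decW (i k) (j k) := by
      rw [hBsy, Wd, List.flatMap_map]
    have hOky : Ok n Bsy := by
      constructor
      · intro b hbmem
        rw [hBsy] at hbmem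
        obtain ⟨k, hk, rfl⟩ := List.mem_map.mp hbmem
        rw [List.mem_range] at hk
        exact hb k hk
      · rw [hBsy, List.pairwise_map]
        rw [List.pairwise_iff_getElem]
        intro k l hk hl hkl
        simp only [List.length_range] at hk hl
        simp only [List.getElem_range]
        exact ⟨hi k l hkl hl, hj k l hkl hl⟩
    have henty : ∀ x ∈ Wd Bsy, 1 ≤ x ∧ x ≤ n := entries_Wd hOky
    have hent : ∀ x ∈ Wd Bs, 1 ≤ x ∧ x ≤ n := entries_Wd hOk
    have hfc : CommEquiv (CoxeterMatrix.Aₙ n) ((Wd Bsy).map (phi n)) ((Wd Bs).map (phi n)) := by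
      refine hu' _ _ ⟨?_, ?_⟩ ⟨hprod, hred⟩
      · rw [hWdy]; exact hyprod
      · rw [hWdy]; exact hyred
    have hcnt := transfer_count henty hent hfc
    have hpf := transfer_pf henty hent hfc
    have := det Bsy Bs hOky hOk hcnt hpf
    rw [← hWdy, this]
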